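/- Let A₁, …, A_m ∈ ℝⁿˣⁿ be symmetric matrices such that 𝒜(X) = (m^{−1/2}·⟨Aᵢ, X⟩)_{1≤i≤m} satisfies the 2-RIP with RIP constant δ₂ < 1, let x⋆ ∈ ℝⁿ, and let f(x) = (1/(4m))·Σᵢ (⟨Aᵢ, xxᵀ⟩ − ⟨Aᵢ, x⋆x⋆ᵀ⟩)². Then every critical point x of f (i.e., with ∇f(x) = (1/m)·Σᵢ ⟨Aᵢ, xxᵀ − x⋆x⋆ᵀ⟩·Aᵢx = 0) satisfies ‖(xxᵀ − x⋆x⋆ᵀ)·xxᵀ‖_F ≤ δ₂·‖xxᵀ − x⋆x⋆ᵀ‖_F·‖x‖₂². -/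

import Mathlib

open Matrix

/-- The Euclidean (ℓ₂) norm of a vector in `ℝⁿ`. -/
noncomputable def l2norm {p : ℕ} (v : Fin p → ℝ) : ℝ :=
  Real.sqrt (∑ i, v i ^ 2)

/-- The Frobenius norm of a real matrix. -/
noncomputable def frobNorm {p q : ℕ} (A : Matrix (Fin p) (Fin q) ℝ) : ℝ :=
  Real.sqrt (∑ i, ∑ j, (A i j) ^ 2)

/-- The trace inner product `⟨X, Y⟩ = Tr(XᵀY)` of two real matrices. -/
def mip {p q : ℕ} (A B : Matrix (Fin p) (Fin q) ℝ) : ℝ :=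
  Matrix.trace (Aᵀ * B)

lemma mip_expand {p q : ℕ} (X Y : Matrix (Fin p) (Fin q) ℝ) :
    mip X Y = ∑ i, ∑ j, X i j * Y i j := by
  simp only [mip, Matrix.trace, Matrix.diag, Matrix.mul_apply, Matrix.transpose_apply]
  exact Finset.sum_comm

lemma mip_self_nonneg {p q : ℕ} (X : Matrix (Fin p) (Fin q) ℝ) : 0 ≤ mip X X := by
  rw [mip_expand]
  exact Finset.sum_nonneg fun i _ => Finset.sum_nonneg fun j _ => mul_self_nonneg _

lemma frobNorm_sq {p q : ℕ} (X : Matrix (Fin p) (Fin q) ℝ) :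
    frobNorm X ^ 2 = mip X X := by
  rw [frobNorm, Real.sq_sqrt (by positivity), mip_expand]
  simp [sq]

lemma frobNorm_eq_sqrt {p q : ℕ} (X : Matrix (Fin p) (Fin q) ℝ) :
    frobNorm X = Real.sqrt (mip X X) := by
  rw [frobNorm, ← frobNorm_sq, Real.sqrt_sq (by rw [frobNorm]; positivity), frobNorm]

lemma mip_vecMulVec_right {p q : ℕ} (X : Matrix (Fin p) (Fin q) ℝ) (z : Fin p → ℝ)
    (v : Fin q → ℝ) : mip X (vecMulVec z v) = z ⬝ᵥ X.mulVec v := by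
  rw [mip_expand]
  simp only [vecMulVec_apply, dotProduct, mulVec, dotProduct, Finset.mul_sum]
  exact Finset.sum_congr rfl fun i _ => Finset.sum_congr rfl fun j _ => by ring

lemma mip_vecMulVec_both {p q : ℕ} (z z' : Fin p → ℝ) (v v' : Fin q → ℝ) :
    mip (vecMulVec z v) (vecMulVec z' v') = (z ⬝ᵥ z') * (v ⬝ᵥ v') := by
  rw [mip_expand]
  simp only [vecMulVec_apply, dotProduct, Finset.sum_mul_sum]
  exact Finset.sum_congr rfl fun i _ => Finset.sum_congr rfl fun j _ => by ring

lemma mip_add_right {p q : ℕ} (X Y Z : Matrix (Fin p) (Fin q) ℝ) :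
    mip X (Y + Z) = mip X Y + mip X Z := by
  simp [mip_expand, mul_add, Finset.sum_add_distrib]

lemma mip_smul_right {p q : ℕ} (t : ℝ) (X Y : Matrix (Fin p) (Fin q) ℝ) :
    mip X (t • Y) = t * mip X Y := by
  simp [mip_expand, Finset.mul_sum, mul_left_comm]

lemma l2norm_sq {p : ℕ} (v : Fin p → ℝ) : l2norm v ^ 2 = v ⬝ᵥ v := by
  rw [l2norm, Real.sq_sqrt (by positivity), dotProduct]
  simp [sq]

lemma rank_vecMulVec_le {p q : ℕ} (z : Fin p → ℝ) (v : Fin q → ℝ) :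
    (vecMulVec z v).rank ≤ 1 := by
  rw [vecMulVec_eq (ι := Fin 1)]
  calc (replicateCol (Fin 1) z * replicateRow (Fin 1) v).rank ≤ (replicateCol (Fin 1) z).rank :=
        rank_mul_le_left _ _
    _ ≤ 1 := by simpa using rank_le_card_width (replicateCol (Fin 1) z)

lemma rank_add_le' {p q : ℕ} (X Y : Matrix (Fin p) (Fin q) ℝ) :
    (X + Y).rank ≤ X.rank + Y.rank := by
  simp only [Matrix.rank]
  rw [Matrix.mulVecLin_add]
  calc Module.finrank ℝ (LinearMap.range (X.mulVecLin + Y.mulVecLin))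
      ≤ Module.finrank ℝ ((LinearMap.range X.mulVecLin ⊔ LinearMap.range Y.mulVecLin :
          Submodule ℝ (Fin p → ℝ))) := by
        apply Submodule.finrank_mono
        rintro _ ⟨w, rfl⟩
        exact Submodule.add_mem_sup (LinearMap.mem_range_self _ w) (LinearMap.mem_range_self _ w)
    _ ≤ _ := Submodule.finrank_add_le_finrank_add_finrank _ _

lemma mip_self_pos {p q : ℕ} (X : Matrix (Fin p) (Fin q) ℝ) (hX : X ≠ 0) : 0 < mip X X := by
  rw [mip_expand]
  obtain ⟨i, j, hij⟩ : ∃ i j, X i j ≠ 0 := by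
    by_contra h; push_neg at h; exact hX (by ext i j; simpa using h i j)
  have h1 : (0:ℝ) < ∑ j', X i j' * X i j' :=
    Finset.sum_pos' (fun _ _ => mul_self_nonneg _) ⟨j, Finset.mem_univ j, mul_self_pos.mpr hij⟩
  exact Finset.sum_pos' (fun i' _ => Finset.sum_nonneg fun _ _ => mul_self_nonneg _)
    ⟨i, Finset.mem_univ i, h1⟩

lemma mip_quad {p q : ℕ} (X Y : Matrix (Fin p) (Fin q) ℝ) (t : ℝ) :
    mip (X + t • Y) (X + t • Y) = mip X X + 2 * t * mip X Y + t ^ 2 * mip Y Y := by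
  simp only [mip_expand, Matrix.add_apply, Matrix.smul_apply, smul_eq_mul]
  have h : ∀ (i : Fin p) (j : Fin q), (X i j + t * Y i j) * (X i j + t * Y i j) =
      X i j * X i j + 2 * t * (X i j * Y i j) + t ^ 2 * (Y i j * Y i j) := fun i j => by ring
  simp_rw [h, Finset.sum_add_distrib, ← Finset.mul_sum]

lemma key_arith (δ t u w F a b : ℝ)
    (h1 : a + t ^ 2 * b ≤ (1 + δ) * (F ^ 2 + 2 * t * u ^ 2 + t ^ 2 * (u ^ 2 * w ^ 2)))
    (h2 : (1 - δ) * (F ^ 2 + 2 * (-t) * u ^ 2 + (-t) ^ 2 * (u ^ 2 * w ^ 2))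
      ≤ a + (-t) ^ 2 * b) :
    -(2 * t * u ^ 2) ≤ δ * (F ^ 2 + t ^ 2 * (u ^ 2 * w ^ 2)) := by nlinarith

lemma final_arith (δ u w F : ℝ) (hupos : 0 < u) (hwpos : 0 < w) (hFpos : 0 < F)
    (key : ∀ t : ℝ, -(2 * t * u ^ 2) ≤ δ * (F ^ 2 + t ^ 2 * (u ^ 2 * w ^ 2))) :
    u * w ≤ δ * F * w ^ 2 := by
  have key' := key (-(F / (u * w)))
  have hune : u ≠ 0 := ne_of_gt hupos
  have hwne : w ≠ 0 := ne_of_gt hwpos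
  have h1 : -(2 * (-(F / (u * w))) * u ^ 2) = 2 * F * u / w := by
    field_simp
  have h2 : (-(F / (u * w))) ^ 2 * (u ^ 2 * w ^ 2) = F ^ 2 := by
    field_simp
  rw [h1, h2] at key'
  rw [div_le_iff₀ hwpos] at key'
  nlinarith [key', hFpos, hwpos, hupos]

/-- **Critical points of rank-1 matrix sensing stay close to the truth in their own span.**
If the symmetric sensing operator satisfies the `2`-RIP with constant `δ₂ < 1`, then every
critical point `x` of `f(x) = (1/4m) ∑ᵢ (⟨Aᵢ, xxᵀ⟩ − ⟨Aᵢ, x⋆x⋆ᵀ⟩)²` satisfies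
`‖(xxᵀ − x⋆x⋆ᵀ)xxᵀ‖_F ≤ δ₂‖xxᵀ − x⋆x⋆ᵀ‖_F‖x‖₂²`. -/
theorem rank_one_sensing_critical_point_bound
    (n m : ℕ)
    (A : Fin m → Matrix (Fin n) (Fin n) ℝ)
    (hsym : ∀ i, (A i)ᵀ = A i)
    (δ : ℝ) (hδ : δ < 1)
    (hRIP : ∀ Z : Matrix (Fin n) (Fin n) ℝ, Z.rank ≤ 2 →
      (1 - δ) * frobNorm Z ^ 2 ≤ (1 / (m : ℝ)) * ∑ i, (mip (A i) Z) ^ 2 ∧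
      (1 / (m : ℝ)) * ∑ i, (mip (A i) Z) ^ 2 ≤ (1 + δ) * frobNorm Z ^ 2)
    (xstar x : Fin n → ℝ)
    (hcrit : (1 / (m : ℝ)) • ∑ i,
      mip (A i) (Matrix.vecMulVec x x - Matrix.vecMulVec xstar xstar) •
        Matrix.mulVec (A i) x = 0) :
    frobNorm ((Matrix.vecMulVec x x - Matrix.vecMulVec xstar xstar) *
        Matrix.vecMulVec x x) ≤
      δ * frobNorm (Matrix.vecMulVec x x - Matrix.vecMulVec xstar xstar) * l2norm x ^ 2 := by
  by_cases hx : x = 0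
  · subst hx
    have h0 : Matrix.vecMulVec (0 : Fin n → ℝ) (0 : Fin n → ℝ)
        = (0 : Matrix (Fin n) (Fin n) ℝ) := by
      ext i j; simp [vecMulVec_apply]
    rw [h0, Matrix.mul_zero]
    have hl : l2norm (0 : Fin n → ℝ) = 0 := by simp [l2norm]
    have hf : frobNorm (0 : Matrix (Fin n) (Fin n) ℝ) = 0 := by simp [frobNorm]
    rw [hf, hl]
    ring_nf
    exact le_refl 0
  set P : Matrix (Fin n) (Fin n) ℝ := Matrix.vecMulVec x x with hP
  set Q : Matrix (Fin n) (Fin n) ℝ := Matrix.vecMulVec xstar xstar with hQ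
  set D : Matrix (Fin n) (Fin n) ℝ := P - Q with hD
  set z : Fin n → ℝ := D.mulVec x with hz
  have hM : D * P = Matrix.vecMulVec z x := by
    ext i j
    simp only [hP, Matrix.mul_apply, vecMulVec_apply, hz, Matrix.mulVec, dotProduct]
    rw [Finset.sum_mul]
    exact Finset.sum_congr rfl fun k _ => by ring
  set u : ℝ := l2norm z with husdef
  set w : ℝ := l2norm x with hwdef
  set F : ℝ := frobNorm D with hFdef
  have hu0 : 0 ≤ u := Real.sqrt_nonneg _
  have hw0 : 0 ≤ w := Real.sqrt_nonneg _
  have hF0 : 0 ≤ F := Real.sqrt_nonneg _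
  have hzz : z ⬝ᵥ z = u ^ 2 := (l2norm_sq z).symm
  have hxx : x ⬝ᵥ x = w ^ 2 := (l2norm_sq x).symm
  -- the goal in terms of u, w, F
  have hgoal : frobNorm (D * P) = u * w := by
    rw [hM, frobNorm_eq_sqrt, mip_vecMulVec_both, hzz, hxx,
      show u ^ 2 * w ^ 2 = (u * w) ^ 2 by ring, Real.sqrt_sq (mul_nonneg hu0 hw0)]
  rw [hgoal]
  -- w > 0
  have hw2pos : 0 < w ^ 2 := by
    rw [← hxx]
    have : x ⬝ᵥ x = ∑ i, x i * x i := rfl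
    rw [this]
    obtain ⟨i, hi⟩ : ∃ i, x i ≠ 0 := by
      by_contra h; push_neg at h; exact hx (funext h)
    exact Finset.sum_pos' (fun _ _ => mul_self_nonneg _)
      ⟨i, Finset.mem_univ i, mul_self_pos.mpr hi⟩
  have hwpos : 0 < w := by nlinarith [hw0, hw2pos]
  -- δ ≥ 0
  have hPrank : P.rank ≤ 2 := le_trans (_root_.rank_vecMulVec_le x x) (by norm_num)
  have hδ0 : 0 ≤ δ := by
    obtain ⟨l1, l2⟩ := hRIP P hPrank
    have hPP : frobNorm P ^ 2 = w ^ 2 * w ^ 2 := by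
      rw [frobNorm_sq, hP, mip_vecMulVec_both, hxx]
    rw [hPP] at l1 l2
    nlinarith [l1.trans l2, hw2pos, mul_pos hw2pos hw2pos]
  -- ranks
  have hrankD : D.rank ≤ 2 := by
    have hsplit : D = Matrix.vecMulVec x x + Matrix.vecMulVec (-xstar) xstar := by
      ext i j; simp [hD, hP, hQ, vecMulVec_apply]; ring
    calc D.rank ≤ (Matrix.vecMulVec x x).rank + (Matrix.vecMulVec (-xstar) xstar).rank := by
          rw [hsplit]; exact rank_add_le' _ _
      _ ≤ 1 + 1 := add_le_add (_root_.rank_vecMulVec_le _ _) (_root_.rank_vecMulVec_le _ _)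
      _ = 2 := rfl
  have hrank : ∀ t : ℝ, (D + t • (D * P)).rank ≤ 2 := by
    intro t
    have : D + t • (D * P) = D * (1 + t • P) := by
      rw [Matrix.mul_add, Matrix.mul_one, Matrix.mul_smul]
    rw [this]
    exact le_trans (rank_mul_le_left _ _) hrankD
  -- cross term vanishes
  have hcross : (1 / (m : ℝ)) * ∑ i, mip (A i) D * mip (A i) (D * P) = 0 := by
    have hmi : ∀ i, mip (A i) (D * P) = z ⬝ᵥ (A i).mulVec x := by
      intro i; rw [hM, mip_vecMulVec_right]
    have : ∑ i, mip (A i) D * mip (A i) (D * P)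
        = z ⬝ᵥ (∑ i, mip (A i) D • (A i).mulVec x) := by
      simp_rw [hmi]
      simp only [dotProduct, Finset.sum_apply, Pi.smul_apply, smul_eq_mul, Finset.mul_sum]
      rw [Finset.sum_comm]
      exact Finset.sum_congr rfl fun j _ => Finset.sum_congr rfl fun i _ => by ring
    calc (1 / (m : ℝ)) * ∑ i, mip (A i) D * mip (A i) (D * P)
        = z ⬝ᵥ ((1 / (m : ℝ)) • ∑ i, mip (A i) D • (A i).mulVec x) := by
          rw [this, dotProduct_smul]; simp
      _ = 0 := by rw [hcrit]; simp
  -- expansion of the sensing quadratic form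
  have hgexp : ∀ t : ℝ, (1 / (m : ℝ)) * ∑ i, (mip (A i) (D + t • (D * P))) ^ 2
      = (1 / (m : ℝ)) * ∑ i, (mip (A i) D) ^ 2
        + t ^ 2 * ((1 / (m : ℝ)) * ∑ i, (mip (A i) (D * P)) ^ 2) := by
    intro t
    have hsum : ∑ i, (mip (A i) (D + t • (D * P))) ^ 2
        = ∑ i, (mip (A i) D) ^ 2 + 2 * t * (∑ i, mip (A i) D * mip (A i) (D * P))
          + t ^ 2 * ∑ i, (mip (A i) (D * P)) ^ 2 := by
      simp_rw [mip_add_right, mip_smul_right]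
      have h : ∀ i, (mip (A i) D + t * mip (A i) (D * P)) ^ 2
          = (mip (A i) D) ^ 2 + 2 * t * (mip (A i) D * mip (A i) (D * P))
            + t ^ 2 * (mip (A i) (D * P)) ^ 2 := fun i => by ring
      simp_rw [h, Finset.sum_add_distrib, ← Finset.mul_sum]
    rw [hsum, mul_add, mul_add]
    have : (1 / (m : ℝ)) * (2 * t * ∑ i, mip (A i) D * mip (A i) (D * P))
        = 2 * t * ((1 / (m : ℝ)) * ∑ i, mip (A i) D * mip (A i) (D * P)) := by ring
    rw [this, hcross]
    ring
  -- values of the inner products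
  have hc : mip D (D * P) = u ^ 2 := by
    rw [hM, mip_vecMulVec_right, ← hz, hzz]
  have hqM : mip (D * P) (D * P) = u ^ 2 * w ^ 2 := by
    rw [hM, mip_vecMulVec_both, hzz, hxx]
  have hqD : mip D D = F ^ 2 := (frobNorm_sq D).symm
  -- the key inequality
  have key : ∀ t : ℝ, -(2 * t * u ^ 2) ≤ δ * (F ^ 2 + t ^ 2 * (u ^ 2 * w ^ 2)) := by
    intro t
    have h1 := (hRIP _ (hrank t)).2
    have h2 := (hRIP _ (hrank (-t))).1
    rw [frobNorm_sq, mip_quad, hqD, hc, hqM, hgexp] at h1 h2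
    exact key_arith δ t u w F _ _ h1 h2
  -- finish
  by_cases hu : u = 0
  · rw [hu, zero_mul]
    have : 0 ≤ δ * F * w ^ 2 := by positivity
    exact this
  have hupos : 0 < u := lt_of_le_of_ne hu0 (Ne.symm hu)
  have hzne : z ≠ 0 := by
    intro h; apply hu; rw [husdef, h, l2norm]; simp
  have hDne : D ≠ 0 := by
    intro h; apply hzne; rw [hz, h]; simp
  have hFpos : 0 < F := by
    have h := mip_self_pos D hDne
    rw [hqD] at h
    nlinarith [h, hF0]
  exact final_arith δ u w F hupos hwpos hFpos key
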